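/- Let μ be the product measure on ℝ² of two copies of the Gaussian measure gaussianReal 1 1 (i.e. the distribution of X ~ N₂((1,1)ᵀ, I₂)). Then for every nonzero vector v ∈ ℝ², the lower Lebesgue integral ∫⁻ (v·x)⁻² dμ(x) = ∞, where v·x = v₁x₁ + v₂x₂ is the Euclidean inner product; in particular the function x ↦ 1/(v·x)² is not integrable with respect to μ. -/

import Mathlib

open MeasureTheory ProbabilityTheory Real Set
open scoped ENNReal NNReal

lemma not_integrableOn_aux (a c : ℝ) (ha : a ≠ 0) :
    ¬ IntegrableOn (fun x => 1 / (a * x + c) ^ 2) (Ioo (-c/a) (-c/a + 1)) volume := by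
  intro h
  set x₀ : ℝ := -c/a with hx₀
  have h1 : IntervalIntegrable (fun x => 1 / (a * x + c) ^ 2) volume x₀ (x₀ + 1) := by
    rw [intervalIntegrable_iff_integrableOn_Ioo_of_le (by linarith)]
    exact h
  have h2 := h1.comp_add_right x₀
  rw [show x₀ + 1 - x₀ = 1 by ring, sub_self] at h2
  have h3 : IntervalIntegrable (fun x : ℝ => a⁻¹^2 * (1 / x ^ 2)) volume 0 1 := by
    refine h2.congr (fun x _ => ?_)
    have : a * (x + x₀) + c = a * x := by rw [hx₀, mul_add, mul_div_cancel₀ (-c) ha]; ring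
    simp only [this]
    rw [mul_pow, one_div, one_div, mul_inv, inv_pow]
  have h4 := h3.const_mul (a^2)
  have h5 : IntervalIntegrable (fun x : ℝ => 1 / x ^ 2) volume 0 1 := by
    refine h4.congr (fun x _ => ?_)
    show a ^ 2 * (a⁻¹ ^ 2 * (1 / x ^ 2)) = 1 / x ^ 2
    rw [inv_pow, ← mul_assoc, mul_inv_cancel₀ (pow_ne_zero 2 ha), one_mul]
  have h6 : IntegrableOn (fun x : ℝ => x ^ (-2 : ℝ)) (Ioo (0:ℝ) 1) volume := by
    rw [intervalIntegrable_iff_integrableOn_Ioo_of_le zero_le_one] at h5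
    refine h5.congr_fun (fun x hx => ?_) measurableSet_Ioo
    show (1 : ℝ) / x ^ 2 = x ^ (-2 : ℝ)
    rw [Real.rpow_neg hx.1.le, one_div, show ((2:ℝ)) = ((2:ℕ):ℝ) by norm_num,
      Real.rpow_natCast]
  rw [intervalIntegral.integrableOn_Ioo_rpow_iff one_pos] at h6
  linarith

lemma setLIntegral_ofReal_top {s : Set ℝ} {g : ℝ → ℝ} (hg : Measurable g)
    (h0 : ∀ x, 0 ≤ g x) (hni : ¬ IntegrableOn g s volume) :
    ∫⁻ x in s, ENNReal.ofReal (g x) ∂volume = ⊤ := by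
  by_contra h
  apply hni
  refine ⟨hg.aestronglyMeasurable.restrict, ?_⟩
  rw [hasFiniteIntegral_iff_ofReal (Filter.Eventually.of_forall h0)]
  exact lt_top_iff_ne_top.2 h

lemma gauss_lintegral_top (a c : ℝ) (ha : a ≠ 0) :
    ∫⁻ x, ENNReal.ofReal (1 / (a * x + c) ^ 2) ∂(gaussianReal 1 1) = ⊤ := by
  set g : ℝ → ℝ := fun x => 1 / (a * x + c) ^ 2 with hg
  have hgm : Measurable g := by
    apply Measurable.div measurable_const
    exact ((measurable_const.mul measurable_id).add_const c).pow_const 2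
  have hg0 : ∀ x, 0 ≤ g x := fun x => by positivity
  set x₀ : ℝ := -c/a with hx₀
  set s : Set ℝ := Ioo x₀ (x₀ + 1) with hs
  set δ : ℝ := (√(2 * π))⁻¹ * rexp (-(|x₀| + 2)^2 / 2) with hδdef
  have hδ : 0 < δ := by positivity
  have hpdf : ∀ x ∈ s, ENNReal.ofReal δ ≤ gaussianPDF 1 1 x := by
    intro x hx
    rw [gaussianPDF]
    apply ENNReal.ofReal_le_ofReal
    rw [gaussianPDFReal]
    push_cast
    rw [mul_one, mul_one]
    apply mul_le_mul_of_nonneg_left _ (by positivity)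
    apply Real.exp_le_exp.2
    rw [div_le_div_iff_of_pos_right two_pos, neg_le_neg_iff]
    have h1 : |x - 1| ≤ |x₀| + 2 := by
      rw [abs_le]
      obtain ⟨hl, hr⟩ := abs_le.1 (le_refl |x₀|)
      have h1 := hx.1
      have h2 := hx.2
      constructor
      · nlinarith
      · nlinarith
    calc (x - 1)^2 = |x - 1|^2 := (sq_abs _).symm
      _ ≤ (|x₀| + 2)^2 := by nlinarith [abs_nonneg (x - 1), abs_nonneg x₀]
  have hsint : ∫⁻ x in s, ENNReal.ofReal (g x) ∂volume = ⊤ :=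
    setLIntegral_ofReal_top hgm hg0 (not_integrableOn_aux a c ha)
  rw [gaussianReal_of_var_ne_zero 1 one_ne_zero,
    lintegral_withDensity_eq_lintegral_mul _ (measurable_gaussianPDF 1 1) hgm.ennreal_ofReal]
  rw [eq_top_iff]
  calc (⊤ : ℝ≥0∞) = ENNReal.ofReal δ * ∫⁻ x in s, ENNReal.ofReal (g x) ∂volume := by
        rw [hsint, ENNReal.mul_top (by simp [hδ])]
    _ = ∫⁻ x in s, ENNReal.ofReal δ * ENNReal.ofReal (g x) ∂volume :=
        (lintegral_const_mul _ hgm.ennreal_ofReal).symm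
    _ ≤ ∫⁻ x in s, gaussianPDF 1 1 x * ENNReal.ofReal (g x) ∂volume := by
        refine setLIntegral_mono ((measurable_gaussianPDF 1 1).mul hgm.ennreal_ofReal) fun x hx => ?_
        exact mul_le_mul_left (hpdf x hx) _
    _ ≤ ∫⁻ x, gaussianPDF 1 1 x * ENNReal.ofReal (g x) ∂volume :=
        setLIntegral_le_lintegral _ _
    _ = ∫⁻ x, (gaussianPDF 1 1 * fun x => ENNReal.ofReal (g x)) x ∂volume := rfl

theorem lintegral_inv_sq_dotProduct_eq_top
    (μ : Measure (Fin 2 → ℝ))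
    (hμ : μ = Measure.pi fun _ : Fin 2 => gaussianReal 1 1)
    (v : Fin 2 → ℝ) (hv : v ≠ 0) :
    ∫⁻ x, ENNReal.ofReal (1 / (∑ i, v i * x i) ^ 2) ∂μ = ⊤ ∧
      ¬ Integrable (fun x : Fin 2 → ℝ => 1 / (∑ i, v i * x i) ^ 2) μ := by
  subst hμ
  set ν := gaussianReal 1 1 with hν
  set F : ℝ × ℝ → ℝ≥0∞ := fun p => ENNReal.ofReal (1 / (v 0 * p.1 + v 1 * p.2) ^ 2) with hF
  have hFm : Measurable F := by
    apply Measurable.ennreal_ofReal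
    exact measurable_const.div
      (((measurable_const.mul measurable_fst).add (measurable_const.mul measurable_snd)).pow_const 2)
  have hcomp : ∀ x : Fin 2 → ℝ,
      ENNReal.ofReal (1 / (∑ i, v i * x i) ^ 2) = F (MeasurableEquiv.finTwoArrow x) := by
    intro x
    simp [hF, Fin.sum_univ_two, MeasurableEquiv.finTwoArrow]
  have htop : ∫⁻ x, ENNReal.ofReal (1 / (∑ i, v i * x i) ^ 2)
      ∂(Measure.pi fun _ : Fin 2 => ν) = ⊤ := by
    calc ∫⁻ x, ENNReal.ofReal (1 / (∑ i, v i * x i) ^ 2) ∂(Measure.pi fun _ : Fin 2 => ν)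
        = ∫⁻ x, F (MeasurableEquiv.finTwoArrow x) ∂(Measure.pi fun _ : Fin 2 => ν) := by
          simp_rw [hcomp]
      _ = ∫⁻ p, F p ∂(ν.prod ν) := (measurePreserving_finTwoArrow ν).lintegral_comp hFm
      _ = ⊤ := by
          have h01 : v 0 ≠ 0 ∨ v 1 ≠ 0 := by
            by_contra h
            push_neg at h
            apply hv
            funext i
            fin_cases i <;> simp [h.1, h.2]
          rcases h01 with h0 | h1
          · rw [lintegral_prod_symm' F hFm]
            have : ∀ y : ℝ, ∫⁻ x, F (x, y) ∂ν = ⊤ := fun y =>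
              gauss_lintegral_top (v 0) (v 1 * y) h0
            simp_rw [this]
            simp [lintegral_const]
          · rw [lintegral_prod F hFm.aemeasurable]
            have : ∀ x : ℝ, ∫⁻ y, F (x, y) ∂ν = ⊤ := fun x => by
              have := gauss_lintegral_top (v 1) (v 0 * x) h1
              simpa [hF, add_comm] using this
            simp_rw [this]
            simp [lintegral_const]
  refine ⟨htop, fun hI => ?_⟩
  exact (lintegral_ofReal_ne_top_iff_integrable hI.1
    (Filter.Eventually.of_forall fun x => by positivity)).2 hI htop
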